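/- For 1 ≤ k ≤ ⌊n/2⌋ and n−k ≤ r ≤ n−1, the space of ℚ-valued Minkowski weights on codimension-r cones of the normal fan of Δ(k,n) has dimension ∑_{i=0}^{n-r-1} C(n,i). -/

import Mathlib

open Finset

/-- Pairs `(I,J)` of disjoint subsets of `{1,…,n}` with `|I|+|J| = n−r−1`,
`|I| < k`, `|J| < n−k`, indexing codimension-`r` cones of the normal fan of
the hypersimplex `Δ(k,n)`. -/
def Pairs (n k r : ℕ) : Type :=
  {p : Finset (Fin n) × Finset (Fin n) //
    Disjoint p.1 p.2 ∧ p.1.card + p.2.card = n - r - 1 ∧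
      p.1.card < k ∧ p.2.card < n - k}

/-- The three balancing conditions defining a Minkowski weight of
codimension `r` on the normal fan of `Δ(k,n)`. -/
def IsMinkowskiWeight (n k r : ℕ) (c : Pairs n k r → ℚ) : Prop :=
  (∀ (p q s t : Pairs n k r) (A B : Finset (Fin n)) (x y : Fin n),
      x ≠ y → x ∉ A ∪ B → y ∉ A ∪ B → A.card < k - 1 → B.card < n - k - 1 →
      p.1 = (insert x A, B) → q.1 = (insert y A, B) →
      s.1 = (A, insert x B) → t.1 = (A, insert y B) →
      c p - c q = c s - c t) ∧
  (∀ p q : Pairs n k r, p.1.1.card = k - 1 → p.1.1 = q.1.1 → c p = c q) ∧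
  (∀ p q : Pairs n k r, p.1.2.card = n - k - 1 → p.1.2 = q.1.2 → c p = c q)

/-- The space of `ℚ`-valued Minkowski weights on codimension-`r` cones of the
normal fan of `Δ(k,n)`, as a `ℚ`-subspace of the function space. -/
def MinkowskiWeights (n k r : ℕ) : Submodule ℚ (Pairs n k r → ℚ) where
  carrier := {c | IsMinkowskiWeight n k r c}
  zero_mem' := by
    refine ⟨fun _ _ _ _ _ _ _ _ _ _ _ _ _ _ _ _ => by simp,
      fun _ _ _ _ => rfl, fun _ _ _ _ => rfl⟩
  add_mem' := by
    rintro a b ⟨ha1, ha2, ha3⟩ ⟨hb1, hb2, hb3⟩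
    refine ⟨fun p q s t A B x y h1 h2 h3 h4 h5 h6 h7 h8 h9 => ?_,
      fun p q h h' => ?_, fun p q h h' => ?_⟩
    · have := ha1 p q s t A B x y h1 h2 h3 h4 h5 h6 h7 h8 h9
      have := hb1 p q s t A B x y h1 h2 h3 h4 h5 h6 h7 h8 h9
      simp only [Pi.add_apply]; linarith
    · simp only [Pi.add_apply, ha2 p q h h', hb2 p q h h']
    · simp only [Pi.add_apply, ha3 p q h h', hb3 p q h h']
  smul_mem' := by
    rintro m a ⟨ha1, ha2, ha3⟩
    refine ⟨fun p q s t A B x y h1 h2 h3 h4 h5 h6 h7 h8 h9 => ?_,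
      fun p q h h' => ?_, fun p q h h' => ?_⟩
    · have := ha1 p q s t A B x y h1 h2 h3 h4 h5 h6 h7 h8 h9
      simp only [Pi.smul_apply, smul_eq_mul]
      linear_combination m * this
    · simp only [Pi.smul_apply, ha2 p q h h']
    · simp only [Pi.smul_apply, ha3 p q h h']

namespace MWaux

variable {n k r : ℕ}

instance : Fintype (Pairs n k r) := by unfold Pairs; infer_instance

/-- extension of a weight function to all finsets -/
def wext (m : ℕ) (w : {S : Finset (Fin n) // S.card ≤ m} → ℚ) (S : Finset (Fin n)) : ℚ :=
  if h : S.card ≤ m then w ⟨S, h⟩ else 0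

/-- extension of `c` to all pairs of finsets -/
def pext (c : Pairs n k r → ℚ) (I J : Finset (Fin n)) : ℚ :=
  if h : Disjoint I J ∧ I.card + J.card = n - r - 1 ∧ I.card < k ∧ J.card < n - k
  then c ⟨(I, J), h⟩ else 0

def PhiFun (w : {S : Finset (Fin n) // S.card ≤ n - r - 1} → ℚ) (p : Pairs n k r) : ℚ :=
  ∑ T ∈ p.1.2.powerset, wext (n - r - 1) w (p.1.1 ∪ T)

def W (c : Pairs n k r → ℚ) (S J : Finset (Fin n)) : ℚ :=
  ∑ T ∈ J.powerset, (-1 : ℚ) ^ T.card * pext c (S ∪ T) (J \ T)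

/-- double sum over powersets reindexing -/
lemma double_powerset {α M : Type*} [DecidableEq α] [AddCommMonoid M]
    (J : Finset α) (f : Finset α → Finset α → M) :
    ∑ T ∈ J.powerset, ∑ T' ∈ (J \ T).powerset, f T T'
      = ∑ U ∈ J.powerset, ∑ T ∈ U.powerset, f T (U \ T) := by
  rw [Finset.sum_sigma', Finset.sum_sigma']
  refine Finset.sum_bij' (fun x _ => ⟨x.1 ∪ x.2, x.1⟩) (fun x _ => ⟨x.2, x.1 \ x.2⟩)
    ?_ ?_ ?_ ?_ ?_
  · rintro ⟨T, T'⟩ h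
    simp only [mem_sigma, mem_powerset] at h ⊢
    exact ⟨union_subset h.1 (h.2.trans sdiff_subset), subset_union_left⟩
  · rintro ⟨U, T⟩ h
    simp only [mem_sigma, mem_powerset] at h ⊢
    exact ⟨h.2.trans h.1, sdiff_subset_sdiff h.1 le_rfl⟩
  · rintro ⟨T, T'⟩ h
    simp only [mem_sigma, mem_powerset] at h
    have hd : Disjoint T T' := disjoint_of_subset_right h.2 disjoint_sdiff
    simp [union_sdiff_cancel_left hd]
  · rintro ⟨U, T⟩ h
    simp only [mem_sigma, mem_powerset] at h
    simp [union_sdiff_of_subset h.2]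
  · rintro ⟨T, T'⟩ h
    simp only [mem_sigma, mem_powerset] at h
    have hd : Disjoint T T' := disjoint_of_subset_right h.2 disjoint_sdiff
    simp [union_sdiff_cancel_left hd]

lemma sign_sum (U : Finset (Fin n)) :
    ∑ T ∈ U.powerset, (-1 : ℚ) ^ (U \ T).card = if U = ∅ then 1 else 0 := by
  have : ∑ T ∈ U.powerset, (-1 : ℚ) ^ (U \ T).card
      = ∑ T ∈ U.powerset, (-1 : ℚ) ^ T.card := by
    refine Finset.sum_bij' (fun T _ => U \ T) (fun T _ => U \ T) ?_ ?_ ?_ ?_ ?_ <;>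
      simp +contextual [mem_powerset, Finset.sdiff_sdiff_eq_self]
  rw [this]
  have h := Finset.sum_powerset_neg_one_pow_card (x := U)
  calc ∑ T ∈ U.powerset, (-1 : ℚ) ^ T.card
      = ((∑ T ∈ U.powerset, (-1 : ℤ) ^ T.card : ℤ) : ℚ) := by push_cast; rfl
    _ = _ := by rw [h]; split <;> norm_num

lemma sign_sum' (U : Finset (Fin n)) :
    ∑ T ∈ U.powerset, (-1 : ℚ) ^ T.card = if U = ∅ then 1 else 0 := by
  have h := Finset.sum_powerset_neg_one_pow_card (x := U)
  calc ∑ T ∈ U.powerset, (-1 : ℚ) ^ T.card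
      = ((∑ T ∈ U.powerset, (-1 : ℤ) ^ T.card : ℤ) : ℚ) := by push_cast; rfl
    _ = _ := by rw [h]; split <;> norm_num


section Main

variable (hk1 : 1 ≤ k) (hkn : 2 * k ≤ n) (hrk : n - k ≤ r)

include hkn hrk in
lemma balance {c : Pairs n k r → ℚ} (hc : IsMinkowskiWeight n k r c)
    {A B : Finset (Fin n)} {x y : Fin n}
    (hd : Disjoint A B) (hxy : x ≠ y) (hx : x ∉ A ∪ B) (hy : y ∉ A ∪ B)
    (hcard : A.card + B.card + 1 = n - r - 1) :
    pext c (insert x A) B - pext c (insert y A) B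
      = pext c A (insert x B) - pext c A (insert y B) := by
  have hxA : x ∉ A := fun h => hx (mem_union_left _ h)
  have hxB : x ∉ B := fun h => hx (mem_union_right _ h)
  have hyA : y ∉ A := fun h => hy (mem_union_left _ h)
  have hyB : y ∉ B := fun h => hy (mem_union_right _ h)
  have hp : Disjoint (insert x A) B ∧ (insert x A).card + B.card = n - r - 1 ∧
      (insert x A).card < k ∧ B.card < n - k := by
    rw [Finset.disjoint_insert_left, card_insert_of_notMem hxA]
    exact ⟨⟨hxB, hd⟩, by omega, by omega, by omega⟩
  have hq : Disjoint (insert y A) B ∧ (insert y A).card + B.card = n - r - 1 ∧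
      (insert y A).card < k ∧ B.card < n - k := by
    rw [Finset.disjoint_insert_left, card_insert_of_notMem hyA]
    exact ⟨⟨hyB, hd⟩, by omega, by omega, by omega⟩
  have hs : Disjoint A (insert x B) ∧ A.card + (insert x B).card = n - r - 1 ∧
      A.card < k ∧ (insert x B).card < n - k := by
    rw [Finset.disjoint_insert_right, card_insert_of_notMem hxB]
    exact ⟨⟨hxA, hd⟩, by omega, by omega, by omega⟩
  have ht : Disjoint A (insert y B) ∧ A.card + (insert y B).card = n - r - 1 ∧
      A.card < k ∧ (insert y B).card < n - k := by
    rw [Finset.disjoint_insert_right, card_insert_of_notMem hyB]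
    exact ⟨⟨hyA, hd⟩, by omega, by omega, by omega⟩
  rw [pext, dif_pos hp, pext, dif_pos hq, pext, dif_pos hs, pext, dif_pos ht]
  exact hc.1 ⟨_, hp⟩ ⟨_, hq⟩ ⟨_, hs⟩ ⟨_, ht⟩ A B x y hxy hx hy
    (by omega) (by omega) rfl rfl rfl rfl

include hkn hrk in
lemma W_swap {c : Pairs n k r → ℚ} (hc : IsMinkowskiWeight n k r c)
    {S B : Finset (Fin n)} {x y : Fin n}
    (hSB : Disjoint S B) (hxy : x ≠ y) (hx : x ∉ S ∪ B) (hy : y ∉ S ∪ B)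
    (hcard : S.card + B.card + 1 = n - r - 1) :
    W c S (insert x B) = W c S (insert y B) := by
  have key : ∀ z : Fin n, z ∉ S ∪ B → W c S (insert z B) =
      ∑ T ∈ B.powerset, (-1 : ℚ) ^ T.card *
        (pext c (S ∪ T) (insert z (B \ T)) - pext c (insert z (S ∪ T)) (B \ T)) := by
    intro z hz
    have hzB : z ∉ B := fun h => hz (mem_union_right _ h)
    rw [W, Finset.sum_powerset_insert hzB]
    have e1 : ∀ T ∈ B.powerset, (-1 : ℚ) ^ T.card * pext c (S ∪ T) (insert z B \ T)
        = (-1 : ℚ) ^ T.card * pext c (S ∪ T) (insert z (B \ T)) := by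
      intro T hT
      rw [mem_powerset] at hT
      have hzT : z ∉ T := fun h => hzB (hT h)
      congr 2
      ext a
      simp only [mem_sdiff, mem_insert]
      constructor
      · rintro ⟨(rfl | h), h2⟩
        · exact Or.inl rfl
        · exact Or.inr ⟨h, h2⟩
      · rintro (rfl | ⟨h, h2⟩)
        · exact ⟨Or.inl rfl, hzT⟩
        · exact ⟨Or.inr h, h2⟩
    have e2 : ∀ T ∈ B.powerset, (-1 : ℚ) ^ (insert z T).card
          * pext c (S ∪ insert z T) (insert z B \ insert z T)
        = -((-1 : ℚ) ^ T.card * pext c (insert z (S ∪ T)) (B \ T)) := by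
      intro T hT
      rw [mem_powerset] at hT
      have hzT : z ∉ T := fun h => hzB (hT h)
      have h1 : insert z B \ insert z T = B \ T := by
        ext a
        simp only [mem_sdiff, mem_insert, not_or]
        constructor
        · rintro ⟨(rfl | h), h2, h3⟩
          · exact absurd rfl h2
          · exact ⟨h, h3⟩
        · rintro ⟨h, h2⟩
          exact ⟨Or.inr h, fun hza => hzB (hza ▸ h), h2⟩
      rw [h1, card_insert_of_notMem hzT, union_insert, pow_succ]
      ring
    rw [Finset.sum_congr rfl e1, Finset.sum_congr rfl e2, ← Finset.sum_add_distrib]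
    exact Finset.sum_congr rfl fun T _ => by ring
  rw [key x hx, key y hy, ← sub_eq_zero, ← Finset.sum_sub_distrib]
  apply Finset.sum_eq_zero
  intro T hT
  rw [mem_powerset] at hT
  have hST : Disjoint S T := hSB.mono_right hT
  have hd' : Disjoint (S ∪ T) (B \ T) :=
    Finset.disjoint_union_left.2 ⟨hSB.mono_right sdiff_subset, disjoint_sdiff⟩
  have hsub : (S ∪ T) ∪ (B \ T) ⊆ S ∪ B :=
    union_subset (union_subset subset_union_left (hT.trans subset_union_right))
      (sdiff_subset.trans subset_union_right)
  have hcu := card_union_of_disjoint hST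
  have hcs := card_sdiff_of_subset hT
  have hcl := card_le_card hT
  have hbal := balance hkn hrk hc hd' hxy (fun h => hx (hsub h)) (fun h => hy (hsub h))
    (by omega)
  linear_combination (-(-1 : ℚ) ^ T.card) * hbal

include hkn hrk in
lemma W_congr {c : Pairs n k r → ℚ} (hc : IsMinkowskiWeight n k r c) :
    ∀ (d : ℕ) (S J J' : Finset (Fin n)), (J \ J').card ≤ d → Disjoint S J →
      Disjoint S J' → S.card + J.card = n - r - 1 → J.card = J'.card →
      W c S J = W c S J' := by
  intro d
  induction d with
  | zero =>
    intro S J J' hd _ _ _ hJJ'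
    have h0 : J \ J' = ∅ := card_eq_zero.1 (Nat.le_zero.1 hd)
    have hsub : J ⊆ J' := sdiff_eq_empty_iff_subset.1 h0
    rw [Finset.eq_of_subset_of_card_le hsub (le_of_eq hJJ'.symm)]
  | succ d ih =>
    intro S J J' hd hSJ hSJ' hcard hJJ'
    by_cases hJJ : J = J'
    · rw [hJJ]
    rcases Finset.eq_empty_or_nonempty (J \ J') with h | hne
    · have hsub : J ⊆ J' := sdiff_eq_empty_iff_subset.1 h
      rw [Finset.eq_of_subset_of_card_le hsub (le_of_eq hJJ'.symm)]
    obtain ⟨x, hxm⟩ := hne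
    have hx1 : x ∈ J := (mem_sdiff.1 hxm).1
    have hx2 : x ∉ J' := (mem_sdiff.1 hxm).2
    have hne' : (J' \ J).Nonempty := by
      rcases Finset.eq_empty_or_nonempty (J' \ J) with h | h
      · exact absurd (Finset.eq_of_subset_of_card_le (sdiff_eq_empty_iff_subset.1 h)
          (le_of_eq hJJ')).symm hJJ
      · exact h
    obtain ⟨y, hym⟩ := hne'
    have hy1 : y ∈ J' := (mem_sdiff.1 hym).1
    have hy2 : y ∉ J := (mem_sdiff.1 hym).2
    have hxB : x ∉ J.erase x := notMem_erase _ _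
    have hyB : y ∉ J.erase x := fun h => hy2 (erase_subset _ _ h)
    have hSB : Disjoint S (J.erase x) := hSJ.mono_right (erase_subset _ _)
    have hxS : x ∉ S := disjoint_right.1 hSJ hx1
    have hyS : y ∉ S := disjoint_right.1 hSJ' hy1
    have hcJ : 1 ≤ J.card := card_pos.2 ⟨x, hx1⟩
    have hce := card_erase_of_mem hx1
    have hxy : x ≠ y := fun h => hy2 (h ▸ hx1)
    have step1 : W c S J = W c S (insert y (J.erase x)) := by
      conv_lhs => rw [← insert_erase hx1]
      exact W_swap hkn hrk hc hSB hxy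
        (by simp only [mem_union, not_or]; exact ⟨hxS, hxB⟩)
        (by simp only [mem_union, not_or]; exact ⟨hyS, hyB⟩) (by omega)
    rw [step1]
    apply ih
    · have he : insert y (J.erase x) \ J' = (J \ J').erase x := by
        ext a
        simp only [mem_sdiff, mem_insert, mem_erase]
        constructor
        · rintro ⟨(rfl | ⟨hax, haJ⟩), haJ'⟩
          · exact absurd hy1 haJ'
          · exact ⟨hax, haJ, haJ'⟩
        · rintro ⟨hax, haJ, haJ'⟩
          exact ⟨Or.inr ⟨hax, haJ⟩, haJ'⟩
      rw [he]
      have := card_erase_of_mem hxm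
      omega
    · exact Finset.disjoint_insert_right.2 ⟨hyS, hSB⟩
    · exact hSJ'
    · rw [card_insert_of_notMem hyB]; omega
    · rw [card_insert_of_notMem hyB]; omega

lemma Jc_hcard (n' r' : ℕ) (S : Finset (Fin n')) : n' - r' - 1 - S.card ≤ Sᶜ.card := by
  rw [Finset.card_compl, Fintype.card_fin]
  have := Finset.card_le_univ S
  rw [Fintype.card_fin] at this
  omega

noncomputable def Jc (n' r' : ℕ) (S : Finset (Fin n')) : Finset (Fin n') :=
  (Finset.exists_subset_card_eq (Jc_hcard n' r' S)).choose

lemma Jc_spec (n' r' : ℕ) (S : Finset (Fin n')) :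
    Jc n' r' S ⊆ Sᶜ ∧ (Jc n' r' S).card = n' - r' - 1 - S.card :=
  (Finset.exists_subset_card_eq (Jc_hcard n' r' S)).choose_spec

lemma Jc_subset (S : Finset (Fin n)) : Jc n r S ⊆ Sᶜ := (Jc_spec n r S).1

lemma Jc_card (S : Finset (Fin n)) : (Jc n r S).card = n - r - 1 - S.card := (Jc_spec n r S).2

lemma Jc_disjoint (S : Finset (Fin n)) : Disjoint S (Jc n r S) :=
  disjoint_right.2 fun a ha => by
    have := Jc_subset S ha
    rw [Finset.mem_compl] at this
    exact this

noncomputable def PsiFun (c : Pairs n k r → ℚ)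
    (S : {S : Finset (Fin n) // S.card ≤ n - r - 1}) : ℚ :=
  W c S.1 (Jc n r S.1)

include hk1 hkn hrk in
lemma valid_pair {I J : Finset (Fin n)} (hd : Disjoint I J)
    (hcard : I.card + J.card = n - r - 1) :
    Disjoint I J ∧ I.card + J.card = n - r - 1 ∧ I.card < k ∧ J.card < n - k :=
  ⟨hd, hcard, by omega, by omega⟩

include hk1 hkn hrk in
lemma Psi_Phi (w : {S : Finset (Fin n) // S.card ≤ n - r - 1} → ℚ) :
    PsiFun (PhiFun (k := k) w) = w := by
  funext S0
  set S : Finset (Fin n) := S0.1 with hSdef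
  have hS : S.card ≤ n - r - 1 := S0.2
  have hJd : Disjoint S (Jc n r S) := Jc_disjoint S
  have hJc : (Jc n r S).card = n - r - 1 - S.card := Jc_card S
  rw [PsiFun, W]
  have step : ∀ T ∈ (Jc n r S).powerset,
      (-1 : ℚ) ^ T.card * pext (PhiFun (k := k) w) (S ∪ T) (Jc n r S \ T)
        = ∑ T' ∈ (Jc n r S \ T).powerset,
            (-1 : ℚ) ^ T.card * wext (n - r - 1) w (S ∪ T ∪ T') := by
    intro T hT
    rw [mem_powerset] at hT
    have hST : Disjoint S T := hJd.mono_right hT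
    have hd' : Disjoint (S ∪ T) (Jc n r S \ T) :=
      Finset.disjoint_union_left.2 ⟨hJd.mono_right sdiff_subset, disjoint_sdiff⟩
    have hcu := card_union_of_disjoint hST
    have hcs := card_sdiff_of_subset hT
    have hcl := card_le_card hT
    have hv := valid_pair hk1 hkn hrk hd' (by omega)
    rw [pext, dif_pos hv]
    simp only [PhiFun]
    rw [mul_sum]
  rw [Finset.sum_congr rfl step, double_powerset (Jc n r S)
    (fun T T' => (-1 : ℚ) ^ T.card * wext (n - r - 1) w (S ∪ T ∪ T'))]
  have step2 : ∀ U ∈ (Jc n r S).powerset,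
      ∑ T ∈ U.powerset, (-1 : ℚ) ^ T.card * wext (n - r - 1) w (S ∪ T ∪ (U \ T))
        = if U = ∅ then wext (n - r - 1) w (S ∪ U) else 0 := by
    intro U hU
    have e : ∀ T ∈ U.powerset, (-1 : ℚ) ^ T.card * wext (n - r - 1) w (S ∪ T ∪ (U \ T))
        = (-1 : ℚ) ^ T.card * wext (n - r - 1) w (S ∪ U) := by
      intro T hT
      rw [mem_powerset] at hT
      rw [union_assoc, union_sdiff_of_subset hT]
    rw [Finset.sum_congr rfl e, ← Finset.sum_mul, sign_sum']
    split <;> simp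
  rw [Finset.sum_congr rfl step2, Finset.sum_ite_eq' (Jc n r S).powerset ∅
    (fun U => wext (n - r - 1) w (S ∪ U))]
  rw [if_pos (Finset.empty_mem_powerset _), union_empty, wext, dif_pos hS]

include hk1 hkn hrk in
lemma Phi_Psi {c : Pairs n k r → ℚ} (hc : IsMinkowskiWeight n k r c) :
    PhiFun (PsiFun c) = c := by
  funext p
  have hd : Disjoint p.1.1 p.1.2 := p.2.1
  have hcard : p.1.1.card + p.1.2.card = n - r - 1 := p.2.2.1
  rw [PhiFun]
  have stepA : ∀ T ∈ p.1.2.powerset, wext (n - r - 1) (PsiFun c) (p.1.1 ∪ T)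
      = ∑ T' ∈ (p.1.2 \ T).powerset,
          (-1 : ℚ) ^ T'.card * pext c (p.1.1 ∪ T ∪ T') (p.1.2 \ (T ∪ T')) := by
    intro T hT
    rw [mem_powerset] at hT
    have hIT : Disjoint p.1.1 T := hd.mono_right hT
    have hcu := card_union_of_disjoint hIT
    have hcl := card_le_card hT
    have hcs := card_sdiff_of_subset hT
    have hITm : (p.1.1 ∪ T).card ≤ n - r - 1 := by omega
    rw [wext, dif_pos hITm, PsiFun]
    have hcong := W_congr hkn hrk hc ((Jc n r (p.1.1 ∪ T)) \ (p.1.2 \ T)).card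
      (p.1.1 ∪ T) (Jc n r (p.1.1 ∪ T)) (p.1.2 \ T) le_rfl
      (Jc_disjoint _)
      (Finset.disjoint_union_left.2 ⟨hd.mono_right sdiff_subset, disjoint_sdiff⟩)
      (by rw [Jc_card]; omega)
      (by rw [Jc_card]; omega)
    rw [hcong, W]
    apply Finset.sum_congr rfl
    intro T' hT'
    have hsd : (p.1.2 \ T) \ T' = p.1.2 \ (T ∪ T') := by
      ext a
      simp only [mem_sdiff, mem_union, not_or]
      tauto
    rw [hsd]
  rw [Finset.sum_congr rfl stepA, double_powerset p.1.2
    (fun T T' => (-1 : ℚ) ^ T'.card * pext c (p.1.1 ∪ T ∪ T') (p.1.2 \ (T ∪ T')))]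
  have stepB : ∀ U ∈ p.1.2.powerset,
      ∑ T ∈ U.powerset, (-1 : ℚ) ^ (U \ T).card
          * pext c (p.1.1 ∪ T ∪ (U \ T)) (p.1.2 \ (T ∪ (U \ T)))
        = if U = ∅ then pext c (p.1.1 ∪ U) (p.1.2 \ U) else 0 := by
    intro U hU
    have e : ∀ T ∈ U.powerset, (-1 : ℚ) ^ (U \ T).card
          * pext c (p.1.1 ∪ T ∪ (U \ T)) (p.1.2 \ (T ∪ (U \ T)))
        = (-1 : ℚ) ^ (U \ T).card * pext c (p.1.1 ∪ U) (p.1.2 \ U) := by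
      intro T hT
      rw [mem_powerset] at hT
      rw [union_assoc, union_sdiff_of_subset hT]
    rw [Finset.sum_congr rfl e, ← Finset.sum_mul, sign_sum]
    split <;> simp
  rw [Finset.sum_congr rfl stepB, Finset.sum_ite_eq' p.1.2.powerset ∅
    (fun U => pext c (p.1.1 ∪ U) (p.1.2 \ U))]
  rw [if_pos (Finset.empty_mem_powerset _), union_empty, sdiff_empty, pext,
    dif_pos (show Disjoint p.1.1 p.1.2 ∧ _ ∧ _ ∧ _ from p.2)]
  exact congrArg c (Subtype.ext rfl)

lemma PhiFun_add (w w' : {S : Finset (Fin n) // S.card ≤ n - r - 1} → ℚ) :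
    PhiFun (k := k) (w + w') = PhiFun w + PhiFun w' := by
  funext p
  simp only [PhiFun, Pi.add_apply, ← Finset.sum_add_distrib]
  apply Finset.sum_congr rfl
  intro T _
  rw [wext, wext, wext]
  split <;> simp

lemma PhiFun_smul (a : ℚ) (w : {S : Finset (Fin n) // S.card ≤ n - r - 1} → ℚ) :
    PhiFun (k := k) (a • w) = a • PhiFun w := by
  funext p
  simp only [PhiFun, Pi.smul_apply, smul_eq_mul, Finset.mul_sum]
  apply Finset.sum_congr rfl
  intro T _
  rw [wext, wext]
  split <;> simp

include hkn hrk in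
lemma eq_of_fst (p q : Pairs n k r) (h1 : p.1.1.card = k - 1) (h2 : p.1.1 = q.1.1) :
    p = q := by
  have hp := p.2.2
  have hq := q.2.2
  have hq1 : q.1.1.card = k - 1 := h2 ▸ h1
  have hpJ : p.1.2 = ∅ := card_eq_zero.1 (by omega)
  have hqJ : q.1.2 = ∅ := card_eq_zero.1 (by omega)
  exact Subtype.ext (Prod.ext h2 (hpJ.trans hqJ.symm))

include hkn hrk in
lemma eq_of_snd (p q : Pairs n k r) (h1 : p.1.2.card = n - k - 1) (h2 : p.1.2 = q.1.2) :
    p = q := by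
  have hp := p.2.2
  have hq := q.2.2
  have hq1 : q.1.2.card = n - k - 1 := h2 ▸ h1
  have hpI : p.1.1 = ∅ := card_eq_zero.1 (by omega)
  have hqI : q.1.1 = ∅ := card_eq_zero.1 (by omega)
  exact Subtype.ext (Prod.ext (hpI.trans hqI.symm) h2)

include hkn hrk in
lemma PhiFun_balanced (w : {S : Finset (Fin n) // S.card ≤ n - r - 1} → ℚ) :
    IsMinkowskiWeight n k r (PhiFun w) := by
  refine ⟨?_, ?_, ?_⟩
  · intro p q s t A B x y hxy hx hy _ _ hp hq hs ht
    have hxB : x ∉ B := fun h => hx (mem_union_right _ h)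
    have hyB : y ∉ B := fun h => hy (mem_union_right _ h)
    have ep : PhiFun w p = ∑ T ∈ B.powerset, wext (n - r - 1) w (insert x A ∪ T) := by
      rw [PhiFun, hp]
    have eq' : PhiFun w q = ∑ T ∈ B.powerset, wext (n - r - 1) w (insert y A ∪ T) := by
      rw [PhiFun, hq]
    have es : PhiFun w s = ∑ T ∈ (insert x B).powerset, wext (n - r - 1) w (A ∪ T) := by
      rw [PhiFun, hs]
    have et : PhiFun w t = ∑ T ∈ (insert y B).powerset, wext (n - r - 1) w (A ∪ T) := by
      rw [PhiFun, ht]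
    rw [ep, eq', es, et, Finset.sum_powerset_insert hxB, Finset.sum_powerset_insert hyB]
    have ex : ∀ z : Fin n, ∑ T ∈ B.powerset, wext (n - r - 1) w (A ∪ insert z T)
        = ∑ T ∈ B.powerset, wext (n - r - 1) w (insert z A ∪ T) :=
      fun z => Finset.sum_congr rfl fun T _ => by rw [union_insert, insert_union]
    rw [ex x, ex y]
    ring
  · intro p q h1 h2
    rw [eq_of_fst hkn hrk p q h1 h2]
  · intro p q h1 h2
    rw [eq_of_snd hkn hrk p q h1 h2]

end Main

end MWaux

/-- For `1 ≤ k ≤ ⌊n/2⌋` and `n−k ≤ r ≤ n−1`, the space of `ℚ`-valued Minkowski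
weights on codimension-`r` cones of the normal fan of `Δ(k,n)` has dimension
`∑_{i=0}^{n-r-1} C(n,i)`. -/


theorem stmt13 (n k r : ℕ) (hk1 : 1 ≤ k) (hk2 : k ≤ n / 2)
    (hr1 : n - k ≤ r) (hr2 : r ≤ n - 1) :
    Module.finrank ℚ (MinkowskiWeights n k r)
      = ∑ i ∈ Finset.range (n - r), n.choose i := by
  classical
  have hkn : 2 * k ≤ n := by
    rw [Nat.le_div_iff_mul_le (by norm_num)] at hk2
    omega
  have hΦmem : ∀ w : {S : Finset (Fin n) // S.card ≤ n - r - 1} → ℚ,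
      MWaux.PhiFun (k := k) w ∈ MinkowskiWeights n k r :=
    fun w => MWaux.PhiFun_balanced hkn hr1 w
  let Φ : ({S : Finset (Fin n) // S.card ≤ n - r - 1} → ℚ) →ₗ[ℚ]
      MinkowskiWeights n k r :=
    { toFun := fun w => ⟨MWaux.PhiFun w, hΦmem w⟩
      map_add' := fun w w' => Subtype.ext (MWaux.PhiFun_add w w')
      map_smul' := fun a w => Subtype.ext (MWaux.PhiFun_smul a w) }
  have hbij : Function.Bijective Φ := by
    constructor
    · intro w w' h
      have hval : MWaux.PhiFun (k := k) w = MWaux.PhiFun w' := congrArg Subtype.val h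
      calc w = MWaux.PsiFun (MWaux.PhiFun (k := k) w) :=
            (MWaux.Psi_Phi hk1 hkn hr1 w).symm
        _ = MWaux.PsiFun (MWaux.PhiFun (k := k) w') := by rw [hval]
        _ = w' := MWaux.Psi_Phi hk1 hkn hr1 w'
    · rintro ⟨c, hc⟩
      exact ⟨MWaux.PsiFun c, Subtype.ext (MWaux.Phi_Psi hk1 hkn hr1 hc)⟩
  rw [← LinearEquiv.finrank_eq (LinearEquiv.ofBijective Φ hbij),
    Module.finrank_fintype_fun_eq_card]
  rw [Fintype.card_subtype]
  have hfil : Finset.univ.filter (fun S : Finset (Fin n) => S.card ≤ n - r - 1)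
      = (Finset.range (n - r)).biUnion (fun i => Finset.powersetCard i Finset.univ) := by
    ext S
    simp only [mem_filter, mem_univ, true_and, mem_biUnion, mem_range,
      Finset.mem_powersetCard, Finset.subset_univ, true_and]
    constructor
    · intro h
      exact ⟨S.card, by omega, rfl⟩
    · rintro ⟨i, hi, rfl⟩
      omega
  rw [hfil, Finset.card_biUnion]
  · apply Finset.sum_congr rfl
    intro i _
    rw [Finset.card_powersetCard, Finset.card_univ, Fintype.card_fin]
  · intro i _ j _ hij
    rw [Function.onFun_apply, Finset.disjoint_left]
    intro S hS hS'
    rw [Finset.mem_powersetCard] at hS hS'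
    exact hij (hS.2 ▸ hS'.2 ▸ rfl)
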